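/- Let G be a finitely generated nilpotent group and V ≤ G a subgroup. Then there are at most finitely many finite index surgroups of V generated by V and one element; that is, the set of subgroups H of G such that H is generated by V∪{c} for some c∈G and V has finite index in H is finite. -/

import Mathlib

open Subgroup hiding lowerCentralSeries lowerCentralSeries_zero
open scoped commutatorElement

namespace LCSOld

def lowerCentralSeries (G : Type*) [Group G] (n : ℕ) : Subgroup G :=
  (⊤ : Subgroup G).lowerCentralSeries n

theorem lcsOld_zero (G : Type*) [Group G] : lowerCentralSeries G 0 = ⊤ := rfl

theorem lcsOld_antitone (G : Type*) [Group G] : Antitone (lowerCentralSeries G) :=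
  Subgroup.lowerCentralSeries_antitone ⊤

instance lcsOld_normal (G : Type*) [Group G] (n : ℕ) : (lowerCentralSeries G n).Normal :=
  inferInstanceAs ((⊤ : Subgroup G).lowerCentralSeries n).Normal

end LCSOld

open LCSOld

universe u
variable {G : Type u} [Group G]

open Subgroup hiding lowerCentralSeries lowerCentralSeries_zero

variable {G : Type u} [Group G]

private lemma lcs_succ' (n : ℕ) :
    lowerCentralSeries G (n+1) = ⁅lowerCentralSeries G n, (⊤ : Subgroup G)⁆ := rfl

private def commSet (S : Set G) : ℕ → Set G
  | 0 => S
  | n+1 => (fun p : G × G => ⁅p.1, p.2⁆) '' ((commSet S n) ×ˢ S)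

private lemma commSet_finite {S : Set G} (hS : S.Finite) : ∀ n, (commSet S n).Finite
  | 0 => hS
  | n+1 => ((commSet_finite hS n).prod hS).image _

private lemma commSet_subset_lcs (S : Set G) : ∀ n, commSet S n ⊆ lowerCentralSeries G n
  | 0 => fun x _ => mem_top x
  | n+1 => by
    rintro x ⟨⟨d, s⟩, ⟨hd, hs⟩, rfl⟩
    rw [SetLike.mem_coe, lcs_succ']
    exact commutator_mem_commutator (commSet_subset_lcs S n hd) (mem_top s)

private lemma commSet_image {G' : Type*} [Group G'] (f : G →* G') (S : Set G) :
    ∀ n, commSet (f '' S) n = f '' commSet S n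
  | 0 => rfl
  | n+1 => by
    ext x
    constructor
    · rintro ⟨⟨d, s⟩, ⟨hd, hs⟩, rfl⟩
      rw [commSet_image f S n] at hd
      obtain ⟨d₀, hd₀, rfl⟩ := hd
      obtain ⟨s₀, hs₀, rfl⟩ := hs
      exact ⟨⁅d₀, s₀⁆, ⟨⟨d₀, s₀⟩, ⟨hd₀, hs₀⟩, rfl⟩, map_commutatorElement f d₀ s₀⟩
    · rintro ⟨y, ⟨⟨d, s⟩, ⟨hd, hs⟩, rfl⟩, rfl⟩
      refine ⟨⟨f d, f s⟩, ⟨?_, Set.mem_image_of_mem f hs⟩, (map_commutatorElement f d s).symm⟩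
      rw [commSet_image f S n]
      exact Set.mem_image_of_mem f hd

private lemma lcs_central {n : ℕ} (hbot : lowerCentralSeries G (n+1) = ⊥) {u : G}
    (hu : u ∈ lowerCentralSeries G n) (g : G) : ⁅u, g⁆ = 1 := by
  have h : ⁅u, g⁆ ∈ lowerCentralSeries G (n+1) := by
    rw [lcs_succ']
    exact commutator_mem_commutator hu (mem_top g)
  rw [hbot] at h
  exact mem_bot.mp h

private lemma lcs_map {G' : Type*} [Group G'] (f : G →* G') (hf : Function.Surjective f) :
    ∀ n, (lowerCentralSeries G n).map f = lowerCentralSeries G' n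
  | 0 => by
    rw [lcsOld_zero, lcsOld_zero]
    exact map_top_of_surjective f hf
  | n+1 => by
    rw [lcs_succ', lcs_succ', Subgroup.map_commutator, lcs_map f hf n,
      map_top_of_surjective f hf]

private lemma comm_mul_right (d g h : G) : ⁅d, g * h⁆ = ⁅d, g⁆ * (g * ⁅d, h⁆ * g⁻¹) := by
  simp only [commutatorElement_def]; group

private lemma comm_inv_right (d g : G) : ⁅d, g⁻¹⁆ = g⁻¹ * ⁅d, g⁆⁻¹ * g := by
  simp only [commutatorElement_def]; group

private lemma comm_mul_left (u v g : G) : ⁅u * v, g⁆ = (u * ⁅v, g⁆ * u⁻¹) * ⁅u, g⁆ := by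
  simp only [commutatorElement_def]; group

private lemma comm_inv_left (u g : G) : ⁅u⁻¹, g⁆ = u⁻¹ * ⁅u, g⁆⁻¹ * u := by
  simp only [commutatorElement_def]; group

private lemma conj_of_comm {a b : G} (h : a * b = b * a) : b * a * b⁻¹ = a := by
  rw [← h]; group

private lemma central_conj' {n : ℕ} (h2 : lowerCentralSeries G (n+1) = ⊥) {w : G}
    (hw : w ∈ lowerCentralSeries G n) (g : G) : g * w * g⁻¹ = w :=
  conj_of_comm (commutatorElement_eq_one_iff_mul_comm.mp (lcs_central h2 hw g))

private lemma central_conj {n : ℕ} (h2 : lowerCentralSeries G (n+2) = ⊥) {w : G}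
    (hw : w ∈ lowerCentralSeries G (n+1)) (g : G) : g * w * g⁻¹ = w :=
  central_conj' h2 hw g

private lemma topstep {S : Set G} (hS : closure S = ⊤) {n : ℕ}
    (h2 : lowerCentralSeries G (n+2) = ⊥)
    (hn : lowerCentralSeries G n
      = closure (commSet S n ∪ (lowerCentralSeries G (n+1) : Set G))) :
    lowerCentralSeries G (n+1) = closure (commSet S (n+1)) := by
  set K := closure (commSet S (n+1)) with hK
  have hKle : K ≤ lowerCentralSeries G (n+1) :=
    (closure_le _).mpr (commSet_subset_lcs S (n+1))
  have memL : ∀ u ∈ lowerCentralSeries G n, ∀ g : G,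
      ⁅u, g⁆ ∈ lowerCentralSeries G (n+1) := by
    intro u hu g
    rw [lcs_succ']
    exact commutator_mem_commutator hu (mem_top g)
  -- step 1
  have step1 : ∀ d ∈ commSet S n, ∀ g : G, ⁅d, g⁆ ∈ K := by
    intro d hd
    have hdL : d ∈ lowerCentralSeries G n := commSet_subset_lcs S n hd
    let X : Subgroup G :=
      { carrier := {g : G | ⁅d, g⁆ ∈ K}
        one_mem' := by
          simp only [Set.mem_setOf_eq, commutatorElement_one_right]
          exact one_mem _
        mul_mem' := by
          intro g h hg hh
          simp only [Set.mem_setOf_eq] at *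
          rw [comm_mul_right, central_conj h2 (memL d hdL h) g]
          exact mul_mem hg hh
        inv_mem' := by
          intro g hg
          simp only [Set.mem_setOf_eq] at *
          have hc := central_conj h2 (inv_mem (memL d hdL g)) g⁻¹
          rw [inv_inv] at hc
          rw [comm_inv_right, hc]
          exact inv_mem hg }
    intro g
    have : (⊤ : Subgroup G) ≤ X := by
      rw [← hS]
      refine (closure_le _).mpr ?_
      intro s hs
      exact subset_closure ⟨⟨d, s⟩, ⟨hd, hs⟩, rfl⟩
    exact this (mem_top g)
  -- step 2
  have step2 : ∀ (g : G), ∀ u ∈ lowerCentralSeries G n, ⁅u, g⁆ ∈ K := by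
    intro g
    let Y : Subgroup G :=
      { carrier := {u : G | u ∈ lowerCentralSeries G n ∧ ⁅u, g⁆ ∈ K}
        one_mem' := by
          refine ⟨one_mem _, ?_⟩
          simp only [commutatorElement_one_left]
          exact one_mem _
        mul_mem' := by
          rintro u v ⟨hu1, hu2⟩ ⟨hv1, hv2⟩
          refine ⟨mul_mem hu1 hv1, ?_⟩
          rw [comm_mul_left, central_conj h2 (memL v hv1 g) u]
          exact mul_mem hv2 hu2
        inv_mem' := by
          rintro u ⟨hu1, hu2⟩
          refine ⟨inv_mem hu1, ?_⟩
          have hc := central_conj h2 (inv_mem (memL u hu1 g)) u⁻¹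
          rw [inv_inv] at hc
          rw [comm_inv_left, hc]
          exact inv_mem hu2 }
    intro u hu
    have : lowerCentralSeries G n ≤ Y := by
      rw [hn]
      refine (closure_le _).mpr ?_
      rintro z (hz | hz)
      · exact ⟨commSet_subset_lcs S n hz, step1 z hz g⟩
      · exact ⟨lcsOld_antitone _ (Nat.le_succ n) hz,
          by rw [lcs_central h2 hz g]; exact one_mem K⟩
    exact (this hu).2
  refine le_antisymm ?_ hKle
  rw [lcs_succ']
  exact commutator_le.mpr fun u hu g _ => step2 g u hu

private lemma lcs_eq_closure {S : Set G} (hS : closure S = ⊤) :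
    ∀ n, lowerCentralSeries G n
      = closure (commSet S n ∪ (lowerCentralSeries G (n+1) : Set G))
  | 0 => by
    rw [lcsOld_zero]
    refine le_antisymm ?_ le_top
    rw [← hS]
    exact closure_mono (Set.subset_union_left)
  | n+1 => by
    set N := lowerCentralSeries G (n+2) with hN
    set π := QuotientGroup.mk' N with hπ
    have hsurj : Function.Surjective π := QuotientGroup.mk'_surjective N
    have hker : π.ker = N := QuotientGroup.ker_mk' N
    have hS' : closure (π '' S) = ⊤ := by
      rw [← MonoidHom.map_closure, hS, ← MonoidHom.range_eq_map, MonoidHom.range_eq_top]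
      exact hsurj
    have h2' : lowerCentralSeries (G ⧸ N) (n+2) = ⊥ := by
      rw [← lcs_map π hsurj, Subgroup.map_eq_bot_iff, hker]
    have hn' : lowerCentralSeries (G ⧸ N) n
        = closure (commSet (π '' S) n ∪ (lowerCentralSeries (G ⧸ N) (n+1) : Set (G ⧸ N))) := by
      rw [← lcs_map π hsurj n, lcs_eq_closure hS n, MonoidHom.map_closure, Set.image_union,
        commSet_image, ← Subgroup.coe_map, lcs_map π hsurj]
    have htop := topstep hS' h2' hn'
    have hmap : Subgroup.map π (lowerCentralSeries G (n+1))
        = Subgroup.map π (closure (commSet S (n+1))) := by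
      rw [lcs_map π hsurj, htop, MonoidHom.map_closure, commSet_image]
    have := congrArg (Subgroup.comap π) hmap
    rw [comap_map_eq, comap_map_eq, hker] at this
    rw [sup_eq_left.mpr (lcsOld_antitone _ (Nat.le_succ (n+1)))] at this
    rw [this, Subgroup.closure_union, closure_eq]

private lemma lemC : ∀ (n : ℕ) (G : Type u) [Group G],
    lowerCentralSeries G (n+1) = ⊥ → ∀ (H : Subgroup G) (x : G) (m : ℕ), 0 < m → x ^ m ∈ H →
    ∀ κ ∈ commSet ((H : Set G) ∪ {x}) n, ∃ t, 0 < t ∧ κ ^ t ∈ H := by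
  intro n
  induction n with
  | zero =>
    intro G _ _ H x m hm hx κ hκ
    rcases hκ with hκ | hκ
    · exact ⟨1, one_pos, by simpa using hκ⟩
    · rw [Set.mem_singleton_iff] at hκ
      subst hκ
      exact ⟨m, hm, hx⟩
  | succ n ih =>
    intro G _ hbot H x m hm hx κ hκ
    obtain ⟨⟨d, s⟩, ⟨hd, hs⟩, rfl⟩ := hκ
    set N := lowerCentralSeries G (n+1) with hN
    set π := QuotientGroup.mk' N with hπ
    have hsurj : Function.Surjective π := QuotientGroup.mk'_surjective N
    have hker : π.ker = N := QuotientGroup.ker_mk' N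
    have hbot' : lowerCentralSeries (G ⧸ N) (n+1) = ⊥ := by
      rw [← lcs_map π hsurj, Subgroup.map_eq_bot_iff, hker]
    have himg : π '' ((H : Set G) ∪ {x}) = ((H.map π : Subgroup (G ⧸ N)) : Set (G ⧸ N)) ∪ {π x} := by
      rw [Set.image_union, Set.image_singleton, Subgroup.coe_map]
    have hd' : π d ∈ commSet (((H.map π : Subgroup (G ⧸ N)) : Set (G ⧸ N)) ∪ {π x}) n := by
      rw [← himg, commSet_image]
      exact Set.mem_image_of_mem π hd
    have hx' : (π x) ^ m ∈ H.map π := by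
      rw [← map_pow]
      exact mem_map_of_mem π hx
    obtain ⟨t, ht, htmem⟩ := ih (G ⧸ N) hbot' (H.map π) (π x) m hm hx' (π d) hd'
    -- d ^ t ∈ H ⊔ N
    have hdt : d ^ t ∈ H ⊔ N := by
      have : π (d ^ t) ∈ H.map π := by rw [map_pow]; exact htmem
      have h2 : d ^ t ∈ (H.map π).comap π := this
      rwa [comap_map_eq, hker] at h2
    have hdt' : (d ^ t) ∈ (↑(H ⊔ N) : Set G) := hdt
    rw [Subgroup.mul_normal] at hdt'
    obtain ⟨h, hh, w, hw, hdec⟩ := hdt'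
    have hdL : d ∈ lowerCentralSeries G n := commSet_subset_lcs _ n hd
    have hwN : w ∈ lowerCentralSeries G (n+1) := hw
    have hdec' : h * w = d ^ t := hdec
    have hcent : ∀ k : ℕ, ⁅d ^ k, s⁆ ∈ lowerCentralSeries G (n+1) := fun k =>
      commutator_mem_commutator (pow_mem hdL k) (mem_top s)
    have hkey : ∀ k : ℕ, ⁅d, s⁆ ^ k = ⁅d ^ k, s⁆ := by
      intro k
      induction k with
      | zero => simp
      | succ k ihk =>
        have h1 : ⁅d ^ (k+1), s⁆ = (d * ⁅d ^ k, s⁆ * d⁻¹) * ⁅d, s⁆ := by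
          rw [pow_succ']
          exact comm_mul_left d (d ^ k) s
        rw [h1, central_conj' hbot (hcent k) d, ← ihk, pow_succ]
    have hκt : ⁅d, s⁆ ^ t = ⁅h, s⁆ := by
      have h2 : ⁅h * w, s⁆ = ⁅h, s⁆ := by
        rw [comm_mul_left h w s, lcs_central hbot hwN s]
        group
      rw [hkey t, ← hdec', h2]
    have hκmem : ⁅d, s⁆ ∈ lowerCentralSeries G (n+1) :=
      commutator_mem_commutator hdL (mem_top s)
    rcases hs with hsH | hsx
    · refine ⟨t, ht, ?_⟩
      show ⁅d, s⁆ ^ t ∈ H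
      rw [hκt, commutatorElement_def]
      exact H.mul_mem (H.mul_mem (H.mul_mem hh hsH) (H.inv_mem hh)) (H.inv_mem hsH)
    · rw [Set.mem_singleton_iff] at hsx
      subst hsx
      have hvcent : ⁅h, s⁆ ∈ lowerCentralSeries G (n+1) := by
        rw [← hκt]; exact pow_mem hκmem t
      have hclaim : ∀ k : ℕ, ⁅h, s ^ k⁆ = ⁅h, s⁆ ^ k := by
        intro k
        induction k with
        | zero => simp
        | succ k ihk =>
          have h3 : s ^ (k+1) = s * s ^ k := pow_succ' s k
          rw [h3, comm_mul_right h s (s ^ k), ihk,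
            central_conj' hbot (pow_mem hvcent k) s, pow_succ']
      refine ⟨t * m, Nat.mul_pos ht hm, ?_⟩
      show ⁅d, s⁆ ^ (t * m) ∈ H
      rw [pow_mul, hκt, ← hclaim m, commutatorElement_def]
      exact H.mul_mem (H.mul_mem (H.mul_mem hh hx) (H.inv_mem hh)) (H.inv_mem hx)

private lemma comm_of_central {G : Type u} [Group G] {n : ℕ}
    (hbot : lowerCentralSeries G (n+1) = ⊥) {u : G}
    (hu : u ∈ lowerCentralSeries G n) (g : G) : Commute u g :=
  commutatorElement_eq_one_iff_mul_comm.mp (lcs_central hbot hu g)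

private lemma lemA : ∀ (c : ℕ) (G : Type u) [Group G],
    lowerCentralSeries G c = ⊥ → ∀ (H : Subgroup G) (x : G) (m : ℕ), 0 < m → x ^ m ∈ H →
    closure ((H : Set G) ∪ {x}) = ⊤ → ∀ g : G, ∃ k, 0 < k ∧ g ^ k ∈ H := by
  intro c
  induction c with
  | zero =>
    intro G _ hc H x m hm hx hgen g
    have : g ∈ (⊥ : Subgroup G) := by rw [← hc]; exact mem_top g
    rw [mem_bot] at this
    exact ⟨1, one_pos, by rw [this, pow_one]; exact H.one_mem⟩
  | succ c ih =>
    intro G _ hc H x m hm hx hgen g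
    set A := lowerCentralSeries G c with hA
    set π := QuotientGroup.mk' A with hπ
    have hsurj : Function.Surjective π := QuotientGroup.mk'_surjective A
    have hker : π.ker = A := QuotientGroup.ker_mk' A
    have hc' : lowerCentralSeries (G ⧸ A) c = ⊥ := by
      rw [← lcs_map π hsurj, Subgroup.map_eq_bot_iff, hker]
    have hgen' : closure (((H.map π : Subgroup (G ⧸ A)) : Set (G ⧸ A)) ∪ {π x}) = ⊤ := by
      have : π '' ((H : Set G) ∪ {x}) = ((H.map π : Subgroup (G ⧸ A)) : Set (G ⧸ A)) ∪ {π x} := by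
        rw [Set.image_union, Set.image_singleton, Subgroup.coe_map]
      rw [← this, ← MonoidHom.map_closure, hgen, ← MonoidHom.range_eq_map,
        MonoidHom.range_eq_top]
      exact hsurj
    have hx' : (π x) ^ m ∈ H.map π := by rw [← map_pow]; exact mem_map_of_mem π hx
    obtain ⟨k, hk, hkmem⟩ := ih (G ⧸ A) hc' (H.map π) (π x) m hm hx' hgen' (π g)
    have hgk : g ^ k ∈ (↑(H ⊔ A) : Set G) := by
      have h2 : g ^ k ∈ (H.map π).comap π := by
        show π (g ^ k) ∈ H.map π
        rw [map_pow]; exact hkmem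
      rwa [comap_map_eq, hker] at h2
    rw [Subgroup.mul_normal] at hgk
    obtain ⟨h, hh, a, ha, hdec⟩ := hgk
    have hdec' : h * a = g ^ k := hdec
    have haA : a ∈ lowerCentralSeries G c := ha
    -- every element of A has a power in H
    have htor : ∀ b ∈ lowerCentralSeries G c, ∃ t, 0 < t ∧ b ^ t ∈ H := by
      let B : Subgroup G :=
        { carrier := {b : G | b ∈ lowerCentralSeries G c ∧ ∃ t, 0 < t ∧ b ^ t ∈ H}
          one_mem' := ⟨(lowerCentralSeries G c).one_mem, 1, one_pos, by simpa using H.one_mem⟩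
          mul_mem' := by
            rintro b b' ⟨hb, t, ht, hbt⟩ ⟨hb', t', ht', hbt'⟩
            refine ⟨mul_mem hb hb', t * t', Nat.mul_pos ht ht', ?_⟩
            have hcomm : Commute b b' := comm_of_central hc hb b'
            rw [hcomm.mul_pow]
            have h1 : b ^ (t * t') = (b ^ t) ^ t' := pow_mul b t t'
            have h2 : b' ^ (t * t') = (b' ^ t') ^ t := by rw [mul_comm]; exact pow_mul b' t' t
            rw [h1, h2]
            exact H.mul_mem (pow_mem hbt t') (pow_mem hbt' t)
          inv_mem' := by
            rintro b ⟨hb, t, ht, hbt⟩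
            exact ⟨inv_mem hb, t, ht, by rw [inv_pow]; exact H.inv_mem hbt⟩ }
      have hAB : lowerCentralSeries G c ≤ B := by
        rw [lcs_eq_closure hgen c, hc]
        refine (closure_le _).mpr ?_
        rintro z (hz | hz)
        · exact ⟨commSet_subset_lcs _ c hz, lemC c G hc H x m hm hx z hz⟩
        · simp only [Subgroup.coe_bot, Set.mem_singleton_iff] at hz
          subst hz
          exact B.one_mem
      exact fun b hb => (hAB hb).2
    obtain ⟨t, ht, hat⟩ := htor a haA
    refine ⟨k * t, Nat.mul_pos hk ht, ?_⟩
    rw [pow_mul, ← hdec']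
    have hcomm : Commute h a := (comm_of_central hc haA h).symm
    rw [hcomm.mul_pow]
    exact H.mul_mem (pow_mem hh t) hat

section CT
variable {G : Type u} [Group G]

/-- All elements of `⟨V, x⟩` have a power in `V`, when `x` does. -/
private lemma tor_all [Group.IsNilpotent G] (V : Subgroup G) {x : G} {a : ℕ} (ha : 0 < a)
    (hx : x ^ a ∈ V) : ∀ w ∈ closure ((V : Set G) ∪ {x}), ∃ k, 0 < k ∧ w ^ k ∈ V := by
  set K : Subgroup G := closure ((V : Set G) ∪ {x}) with hK
  have hVK : V ≤ K := fun v hv => subset_closure (Or.inl hv)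
  have hxK : x ∈ K := subset_closure (Or.inr rfl)
  obtain ⟨c, hc⟩ := Subgroup.nilpotent_iff_lowerCentralSeries.mp (Subgroup.isNilpotent K)
  set x₁ : K := ⟨x, hxK⟩ with hx₁
  have hx₁a : x₁ ^ a ∈ V.subgroupOf K := by
    rw [mem_subgroupOf]
    exact hx
  have hgen : closure ((V.subgroupOf K : Set K) ∪ {x₁}) = ⊤ := by
    apply map_injective K.subtype_injective
    rw [MonoidHom.map_closure, ← MonoidHom.range_eq_map, K.range_subtype,
      Set.image_union, Set.image_singleton]
    have h1 : K.subtype '' (V.subgroupOf K : Set K) = ((V ⊓ K : Subgroup G) : Set G) := by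
      rw [← Subgroup.coe_map, subgroupOf_map_subtype]
    rw [h1, inf_eq_left.mpr hVK]
    rfl
  intro w hw
  obtain ⟨k, hk, hkw⟩ := lemA c K hc (V.subgroupOf K) x₁ a ha hx₁a hgen ⟨w, hw⟩
  exact ⟨k, hk, hkw⟩

private lemma tor_mul [Group.IsNilpotent G] (V : Subgroup G) {x y : G}
    (hx : ∃ a, 0 < a ∧ x ^ a ∈ V) (hy : ∃ b, 0 < b ∧ y ^ b ∈ V) :
    ∃ k, 0 < k ∧ (x * y) ^ k ∈ V := by
  obtain ⟨a, ha, hxa⟩ := hx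
  obtain ⟨b, hb, hyb⟩ := hy
  set K₁ : Subgroup G := closure ((V : Set G) ∪ {x}) with hK₁
  have hVK₁ : V ≤ K₁ := fun v hv => subset_closure (Or.inl hv)
  have hxK₁ : x ∈ K₁ := subset_closure (Or.inr rfl)
  have P₁ := tor_all V ha hxa
  have hyb' : y ^ b ∈ K₁ := hVK₁ hyb
  have P₂ := tor_all K₁ hb hyb'
  have hxy : x * y ∈ closure ((K₁ : Set G) ∪ {y}) :=
    mul_mem (subset_closure (Or.inl hxK₁)) (subset_closure (Or.inr rfl))
  obtain ⟨k, hk, hkmem⟩ := P₂ (x * y) hxy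
  obtain ⟨t, ht, htmem⟩ := P₁ ((x * y) ^ k) hkmem
  exact ⟨k * t, Nat.mul_pos hk ht, by rwa [pow_mul]⟩

/-- The isolator of a subgroup of a nilpotent group. -/
private def isolator [Group.IsNilpotent G] (V : Subgroup G) : Subgroup G where
  carrier := {g : G | ∃ k, 0 < k ∧ g ^ k ∈ V}
  one_mem' := ⟨1, one_pos, by simpa using V.one_mem⟩
  mul_mem' := fun {a b} hx hy => tor_mul V hx hy
  inv_mem' := fun {g} hg => by
    obtain ⟨k, hk, h⟩ := hg
    exact ⟨k, hk, by rw [inv_pow]; exact V.inv_mem h⟩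

private lemma le_isolator [Group.IsNilpotent G] (V : Subgroup G) : V ≤ isolator V :=
  fun v hv => ⟨1, one_pos, by simpa using hv⟩

private lemma mem_isolator [Group.IsNilpotent G] {V : Subgroup G} {g : G} :
    g ∈ isolator V ↔ ∃ k, 0 < k ∧ g ^ k ∈ V := Iff.rfl
end CT

private lemma torsion_finite (Q : Type u) [CommGroup Q] [Group.FG Q] :
    Finite ↥(CommGroup.torsion Q) := by
  haveI : AddGroup.FG (Additive Q) := AddGroup.fg_of_group_fg
  haveI : Module.Finite ℤ (Additive Q) := Module.Finite.iff_addGroup_fg.mpr ‹_›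
  haveI : IsNoetherian ℤ (Additive Q) := isNoetherian_of_isNoetherianRing_of_finite ℤ _
  set T := CommGroup.torsion Q with hT
  have hfgsub : T.FG := by
    rw [Subgroup.fg_iff_add_fg]
    have h1 := IsNoetherian.noetherian (AddSubgroup.toIntSubmodule (Subgroup.toAddSubgroup T))
    rwa [Submodule.fg_iff_addSubgroup_fg, AddSubgroup.toIntSubmodule_toAddSubgroup] at h1
  haveI : Group.FG ↥T := (Group.fg_iff_subgroup_fg T).mpr hfgsub
  have htor : Monoid.IsTorsion ↥T := by
    intro t
    have h2 : IsOfFinOrder (t : Q) := t.2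
    rw [isOfFinOrder_iff_pow_eq_one] at h2 ⊢
    obtain ⟨n, hn, hpow⟩ := h2
    exact ⟨n, hn, by ext; simpa using hpow⟩
  exact CommGroup.finite_of_fg_torsion ↥T htor

private lemma iso_relindex : ∀ (c : ℕ) (G : Type u) [Group G] [Group.FG G]
    [Group.IsNilpotent G], lowerCentralSeries G c = ⊥ →
    ∀ V : Subgroup G, V.relIndex (isolator V) ≠ 0 := by
  intro c
  induction c with
  | zero =>
    intro G _ _ _ hc V
    haveI : Subsingleton G := by
      constructor
      intro a b
      have ha : a ∈ (⊥ : Subgroup G) := by rw [← hc]; exact mem_top a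
      have hb : b ∈ (⊥ : Subgroup G) := by rw [← hc]; exact mem_top b
      rw [mem_bot] at ha hb
      rw [ha, hb]
    show (V.subgroupOf (isolator V)).index ≠ 0
    exact Subgroup.index_ne_zero_of_finite
  | succ c ih =>
    intro G _ _ _ hc V
    set A := lowerCentralSeries G c with hA
    obtain ⟨S, hSclos, hSfin⟩ := Group.fg_iff.mp ‹Group.FG G›
    have hAeq : A = closure (commSet S c ∪ ((⊥ : Subgroup G) : Set G)) := by
      rw [hA, lcs_eq_closure hSclos c, hc]
    have hAfg : A.FG := by
      refine (Subgroup.fg_iff A).mpr ⟨commSet S c ∪ ((⊥ : Subgroup G) : Set G), hAeq.symm, ?_⟩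
      refine (commSet_finite hSfin c).union ?_
      rw [coe_bot]
      exact Set.finite_singleton 1
    set π := QuotientGroup.mk' A with hπ
    have hsurj : Function.Surjective π := QuotientGroup.mk'_surjective A
    have hker : π.ker = A := QuotientGroup.ker_mk' A
    have hc' : lowerCentralSeries (G ⧸ A) c = ⊥ := by
      rw [← lcs_map π hsurj, Subgroup.map_eq_bot_iff, hker]
    have hIH := ih (G ⧸ A) hc' (V.map π)
    set I := isolator V with hI
    set W₁ := (isolator (V.map π)).comap π with hW₁
    have h_up : I ≤ W₁ := by
      intro g hg
      obtain ⟨k, hk, hgk⟩ := hg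
      exact ⟨k, hk, by rw [← map_pow]; exact mem_map_of_mem π hgk⟩
    have hVA : (V.map π).comap π = V ⊔ A := by rw [comap_map_eq, hker]
    have h₁ : (V ⊔ A).relIndex W₁ ≠ 0 := by
      rw [← hVA, hW₁, relIndex_comap, map_comap_eq_self_of_surjective hsurj]
      exact hIH
    have h₂ : (V ⊔ A).relIndex I ≠ 0 := fun h0 => h₁ (relIndex_eq_zero_of_le_right h_up h0)
    set U := (V ⊔ A) ⊓ I with hU
    have h₃ : U.relIndex I ≠ 0 := by rw [hU, inf_relIndex_right]; exact h₂
    -- now the key finiteness : V has finite relIndex in U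
    set P := V ⊔ A with hP
    have hconj : ∀ g ∈ P, ∀ v ∈ V, g * v * g⁻¹ ∈ V := by
      intro g hg v hv
      have hg' : g ∈ (↑P : Set G) := hg
      rw [hP, Subgroup.mul_normal] at hg'
      obtain ⟨v', hv', a, ha, rfl⟩ := hg'
      have haA : a ∈ lowerCentralSeries G c := ha
      have h5 : a * v * a⁻¹ = v :=
        conj_of_comm ((comm_of_central hc haA v).symm.eq)
      have h6 : v' * a * v * (v' * a)⁻¹ = v' * (a * v * a⁻¹) * v'⁻¹ := by group
      show v' * a * v * (v' * a)⁻¹ ∈ V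
      rw [h6, h5]
      exact V.mul_mem (V.mul_mem hv' hv) (V.inv_mem hv')
    haveI hN : (V.subgroupOf P).Normal := by
      constructor
      rintro ⟨n, hnP⟩ hn ⟨g, hgP⟩
      rw [mem_subgroupOf] at hn ⊢
      exact hconj g hgP n hn
    set Q₂ := ↥P ⧸ V.subgroupOf P with hQ₂
    set φ : ↥A →* Q₂ := (QuotientGroup.mk' (V.subgroupOf P)).comp
      (Subgroup.inclusion le_sup_right) with hφ
    have hφs : Function.Surjective φ := by
      intro q
      induction q using QuotientGroup.induction_on with
      | H p =>
        have hp : (p : G) ∈ (↑(V ⊔ A) : Set G) := p.2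
        rw [Subgroup.mul_normal] at hp
        obtain ⟨v', hv', a, ha, hdec⟩ := hp
        refine ⟨⟨a, ha⟩, ?_⟩
        show QuotientGroup.mk (Subgroup.inclusion le_sup_right ⟨a, ha⟩) = QuotientGroup.mk p
        rw [QuotientGroup.eq]
        rw [mem_subgroupOf]
        have haA : a ∈ lowerCentralSeries G c := ha
        have hdec' : v' * a = (p : G) := hdec
        simp only [Subgroup.coe_mul, Subgroup.coe_inv, Subgroup.coe_inclusion]
        show a⁻¹ * (p : G) ∈ V
        rw [← hdec']
        have h7 : a⁻¹ * (v' * a) = a⁻¹ * v' * a := by group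
        have h8 : a⁻¹ * v' * a = v' := by
          have := conj_of_comm ((comm_of_central hc (A.inv_mem haA) v').symm.eq)
          simpa using this
        rw [h7, h8]
        exact hv'
    have hcommQ : ∀ q₁ q₂ : Q₂, q₁ * q₂ = q₂ * q₁ := by
      intro q₁ q₂
      obtain ⟨a₁, rfl⟩ := hφs q₁
      obtain ⟨a₂, rfl⟩ := hφs q₂
      rw [← map_mul, ← map_mul]
      congr 1
      ext
      exact (comm_of_central hc a₁.2 (a₂ : G)).eq
    letI : CommGroup Q₂ := { (inferInstance : Group Q₂) with mul_comm := hcommQ }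
    haveI : Group.FG ↥A := (Group.fg_iff_subgroup_fg A).mpr hAfg
    haveI : Group.FG Q₂ := Group.fg_of_surjective hφs
    haveI hTfin : Finite ↥(CommGroup.torsion Q₂) := torsion_finite Q₂
    have hUP : U ≤ P := inf_le_left
    set f : ↥U → ↥(CommGroup.torsion Q₂) := fun u =>
      ⟨QuotientGroup.mk (⟨(u : G), hUP u.2⟩ : ↥P), by
        obtain ⟨k, hk, hpow⟩ := (mem_inf.mp u.2).2
        rw [CommGroup.mem_torsion, isOfFinOrder_iff_pow_eq_one]
        refine ⟨k, hk, ?_⟩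
        rw [← QuotientGroup.mk_pow, QuotientGroup.eq_one_iff, mem_subgroupOf]
        exact hpow⟩ with hf
    have hfc : ∀ u₁ u₂ : ↥U, (QuotientGroup.leftRel (V.subgroupOf U)) u₁ u₂ → f u₁ = f u₂ := by
      intro u₁ u₂ hrel
      rw [QuotientGroup.leftRel_apply, mem_subgroupOf] at hrel
      apply Subtype.ext
      show QuotientGroup.mk _ = QuotientGroup.mk _
      rw [QuotientGroup.eq, mem_subgroupOf]
      exact hrel
    set F : (↥U ⧸ V.subgroupOf U) → ↥(CommGroup.torsion Q₂) := Quotient.lift f hfc with hF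
    have hFinj : Function.Injective F := by
      intro q₁ q₂
      induction q₁ using QuotientGroup.induction_on with
      | H u₁ =>
      induction q₂ using QuotientGroup.induction_on with
      | H u₂ =>
        intro heq
        have h9 : f u₁ = f u₂ := heq
        rw [Subtype.ext_iff] at h9
        have h10 : (QuotientGroup.mk (⟨(u₁ : G), hUP u₁.2⟩ : ↥P) : Q₂)
            = QuotientGroup.mk (⟨(u₂ : G), hUP u₂.2⟩ : ↥P) := h9
        rw [QuotientGroup.eq, mem_subgroupOf] at h10
        apply Quotient.sound'
        rw [QuotientGroup.leftRel_apply, mem_subgroupOf]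
        exact h10
    haveI : Finite (↥U ⧸ V.subgroupOf U) := Finite.of_injective F hFinj
    have h₄ : V.relIndex U ≠ 0 := Subgroup.index_ne_zero_of_finite
    have hVU : V ≤ U := le_inf le_sup_left (le_isolator V)
    have hUI : U ≤ I := inf_le_right
    have hmul := relIndex_mul_relIndex V U I hVU hUI
    rw [← hmul]
    exact Nat.mul_ne_zero h₄ h₃

/-- In a finitely generated nilpotent group, a subgroup `V` admits at most finitely many
finite index surgroups of the form `⟨V, c⟩` (Corollary `cor:fin-ext`). -/
theorem stmt_15 {G : Type*} [Group G] [Group.IsNilpotent G] [Group.FG G]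
    (V : Subgroup G) :
    {H : Subgroup G | (∃ c : G, H = Subgroup.closure ((V : Set G) ∪ {c})) ∧
      V.relIndex H ≠ 0}.Finite := by
  obtain ⟨c, hc⟩ := Subgroup.nilpotent_iff_lowerCentralSeries.mp ‹Group.IsNilpotent G›
  have hrel : V.relIndex (isolator V) ≠ 0 := iso_relindex c G hc V
  set I := isolator V with hI
  -- every member of the set lies between V and I
  have hsub : {H : Subgroup G | (∃ c : G, H = Subgroup.closure ((V : Set G) ∪ {c})) ∧
      V.relIndex H ≠ 0} ⊆ {H : Subgroup G | V ≤ H ∧ H ≤ I} := by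
    rintro H ⟨⟨c₀, rfl⟩, hrel0⟩
    have hVH : V ≤ Subgroup.closure ((V : Set G) ∪ {c₀}) :=
      fun v hv => subset_closure (Or.inl hv)
    have hc₀H : c₀ ∈ Subgroup.closure ((V : Set G) ∪ {c₀}) := subset_closure (Or.inr rfl)
    refine ⟨hVH, ?_⟩
    set H := Subgroup.closure ((V : Set G) ∪ {c₀}) with hH
    -- c₀ has a power in V
    have hfinq : Finite (↥H ⧸ V.subgroupOf H) := by
      have h1 : (V.subgroupOf H).index ≠ 0 := hrel0
      rw [Subgroup.index_eq_card] at h1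
      exact (Nat.card_ne_zero.mp h1).2
    set c' : ↥H := ⟨c₀, hc₀H⟩ with hc'
    obtain ⟨m, n, hmn, heq⟩ := Finite.exists_ne_map_eq_of_infinite
      (fun k : ℕ => (QuotientGroup.mk (c' ^ k) : ↥H ⧸ V.subgroupOf H))
    have hko : ∀ m n : ℕ, m < n →
        (QuotientGroup.mk (c' ^ m) : ↥H ⧸ V.subgroupOf H) = QuotientGroup.mk (c' ^ n) →
        c₀ ∈ I := by
      intro m n hlt heq'
      rw [QuotientGroup.eq, mem_subgroupOf] at heq'
      have hpow : ((c' ^ m)⁻¹ * c' ^ n : ↥H) = c' ^ (n - m) := by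
        have h2 : c' ^ m * c' ^ (n - m) = c' ^ n := by
          rw [← pow_add]
          congr 1
          omega
        rw [← h2]
        group
      rw [hpow] at heq'
      have hco : ((c' ^ (n - m) : ↥H) : G) = c₀ ^ (n - m) := by
        simp [hc']
      rw [hco] at heq'
      exact ⟨n - m, by omega, heq'⟩
    have hc₀I : c₀ ∈ I := by
      rcases hmn.lt_or_gt with hlt | hlt
      · exact hko m n hlt heq
      · exact hko n m hlt heq.symm
    have hle : ((V : Set G) ∪ {c₀}) ⊆ (I : Set G) := by
      rintro z (hz | hz)
      · exact le_isolator V hz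
      · rw [Set.mem_singleton_iff] at hz
        subst hz
        exact hc₀I
    exact (closure_le I).mpr hle
  refine Set.Finite.subset ?_ hsub
  -- the set of subgroups between V and I is finite
  haveI hfinI : Finite (↥I ⧸ V.subgroupOf I) := by
    have h1 : (V.subgroupOf I).index ≠ 0 := hrel
    rw [Subgroup.index_eq_card] at h1
    exact (Nat.card_ne_zero.mp h1).2
  set Φ : Subgroup G → Set (↥I ⧸ V.subgroupOf I) :=
    fun H => QuotientGroup.mk '' {u : ↥I | (u : G) ∈ H} with hΦ
  have hinj : Set.InjOn Φ {H : Subgroup G | V ≤ H ∧ H ≤ I} := by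
    have key : ∀ (H₁' H₂' : Subgroup G), V ≤ H₂' → H₁' ≤ I → Φ H₁' = Φ H₂' → H₁' ≤ H₂' := by
      intro H₁' H₂' hV2 h1I hΦe
      intro x hx
      have hxI : x ∈ I := h1I hx
      have hmem : (QuotientGroup.mk (⟨x, hxI⟩ : ↥I) : ↥I ⧸ V.subgroupOf I) ∈ Φ H₁' :=
        ⟨⟨x, hxI⟩, hx, rfl⟩
      rw [hΦe] at hmem
      obtain ⟨u, huH₂, hueq⟩ := hmem
      rw [QuotientGroup.eq, mem_subgroupOf] at hueq
      have h3 : x = (u : G) * ((u : G)⁻¹ * x) := by group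
      rw [h3]
      exact H₂'.mul_mem huH₂ (hV2 hueq)
    rintro H₁ ⟨hVH₁, hH₁I⟩ H₂ ⟨hVH₂, hH₂I⟩ hΦeq
    exact le_antisymm (key H₁ H₂ hVH₂ hH₁I hΦeq) (key H₂ H₁ hVH₁ hH₂I hΦeq.symm)
  have himg : (Φ '' {H : Subgroup G | V ≤ H ∧ H ≤ I}).Finite := Set.toFinite _
  exact Set.Finite.of_finite_image himg hinj
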